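/- Let f₀, f₁ : ℚ → Scat assign nonempty countable scattered linear orders such that for each i and each L in the range of f_i, the preimage f_i⁻¹({orders isomorphic to L}) is dense in ℚ. Then η^{f₀} ≅ η^{f₁} if and only if f₀(ℚ) and f₁(ℚ) contain the same linear orders up to isomorphism. -/

import Mathlib

noncomputable section

open Order Set

namespace Stmt14Aux

/-! ### Colored back-and-forth on `ℚ` -/

variable (R : ℚ → ℚ → Prop)

/-- Partial isomorphisms of `ℚ` compatible with a relation `R`. -/
def CPI : Type :=
  { f : Finset (ℚ × ℚ) //
    (∀ p ∈ f, ∀ q ∈ f, cmp (Prod.fst p) (Prod.fst q) = cmp (Prod.snd p) (Prod.snd q)) ∧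
    ∀ p ∈ f, R p.1 p.2 }

instance : Inhabited (CPI R) :=
  ⟨⟨∅, fun _ h => absurd h (Finset.notMem_empty _),
      fun _ h => absurd h (Finset.notMem_empty _)⟩⟩

instance : Preorder (CPI R) := Subtype.preorder _

variable {R}

theorem exists_between' (h1 : ∀ a x y : ℚ, x < y → ∃ b, x < b ∧ b < y ∧ R a b)
    (a : ℚ) (lo hi : Finset ℚ) (lo_lt_hi : ∀ x ∈ lo, ∀ y ∈ hi, x < y) :
    ∃ m, R a m ∧ (∀ x ∈ lo, x < m) ∧ ∀ y ∈ hi, m < y := by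
  by_cases nlo : lo.Nonempty <;> by_cases nhi : hi.Nonempty
  · obtain ⟨m, hm1, hm2, hm3⟩ :=
      h1 a _ _ (lo_lt_hi _ (lo.max'_mem nlo) _ (hi.min'_mem nhi))
    exact ⟨m, hm3, fun x hx => (Finset.le_max' lo x hx).trans_lt hm1,
      fun y hy => hm2.trans_le (Finset.min'_le hi y hy)⟩
  · obtain ⟨m, hm1, _, hm3⟩ := h1 a (lo.max' nlo) (lo.max' nlo + 1) (by linarith)
    exact ⟨m, hm3, fun x hx => (Finset.le_max' lo x hx).trans_lt hm1,
      fun y hy => absurd ⟨y, hy⟩ nhi⟩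
  · obtain ⟨m, _, hm2, hm3⟩ := h1 a (hi.min' nhi - 1) (hi.min' nhi) (by linarith)
    exact ⟨m, hm3, fun x hx => absurd ⟨x, hx⟩ nlo,
      fun y hy => hm2.trans_le (Finset.min'_le hi y hy)⟩
  · obtain ⟨m, _, _, hm3⟩ := h1 a 0 1 one_pos
    exact ⟨m, hm3, fun x hx => absurd ⟨x, hx⟩ nlo, fun y hy => absurd ⟨y, hy⟩ nhi⟩

theorem exists_across (h1 : ∀ a x y : ℚ, x < y → ∃ b, x < b ∧ b < y ∧ R a b)
    (f : CPI R) (a : ℚ) :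
    ∃ b : ℚ, R a b ∧ ∀ p ∈ f.val, cmp (Prod.fst p) a = cmp (Prod.snd p) b := by
  by_cases h : ∃ b, (a, b) ∈ f.val
  · obtain ⟨b, hb⟩ := h
    exact ⟨b, f.prop.2 _ hb, fun p hp => f.prop.1 _ hp _ hb⟩
  have key :
      ∀ x ∈ (f.val.filter fun p : ℚ × ℚ => p.1 < a).image Prod.snd,
        ∀ y ∈ (f.val.filter fun p : ℚ × ℚ => a < p.1).image Prod.snd, x < y := by
    intro x hx y hy
    rw [Finset.mem_image] at hx hy
    rcases hx with ⟨p, hp1, rfl⟩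
    rcases hy with ⟨q, hq1, rfl⟩
    rw [Finset.mem_filter] at hp1 hq1
    rw [← lt_iff_lt_of_cmp_eq_cmp (f.prop.1 _ hp1.1 _ hq1.1)]
    exact lt_trans hp1.2 hq1.2
  obtain ⟨b, hRb, hb1, hb2⟩ := exists_between' h1 a _ _ key
  refine ⟨b, hRb, ?_⟩
  rintro ⟨p1, p2⟩ hp
  have hne : p1 ≠ a := fun he => h ⟨p2, he ▸ hp⟩
  rcases lt_or_gt_of_ne hne with hl | hr
  · have hthis : p1 < a ∧ p2 < b :=
      ⟨hl, hb1 _ (Finset.mem_image.mpr ⟨(p1, p2), Finset.mem_filter.mpr ⟨hp, hl⟩, rfl⟩)⟩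
    rw [← cmp_eq_lt_iff, ← cmp_eq_lt_iff] at hthis
    exact hthis.1.trans hthis.2.symm
  · have hthis : a < p1 ∧ b < p2 :=
      ⟨hr, hb2 _ (Finset.mem_image.mpr ⟨(p1, p2), Finset.mem_filter.mpr ⟨hp, hr⟩, rfl⟩)⟩
    rw [← cmp_eq_gt_iff, ← cmp_eq_gt_iff] at hthis
    exact hthis.1.trans hthis.2.symm

theorem exists_across_right (h2 : ∀ b x y : ℚ, x < y → ∃ a, x < a ∧ a < y ∧ R a b)
    (f : CPI R) (b : ℚ) :
    ∃ a : ℚ, R a b ∧ ∀ p ∈ f.val, cmp (Prod.fst p) a = cmp (Prod.snd p) b := by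
  by_cases h : ∃ a, (a, b) ∈ f.val
  · obtain ⟨a, ha⟩ := h
    exact ⟨a, f.prop.2 _ ha, fun p hp => f.prop.1 _ hp _ ha⟩
  have key :
      ∀ x ∈ (f.val.filter fun p : ℚ × ℚ => p.2 < b).image Prod.fst,
        ∀ y ∈ (f.val.filter fun p : ℚ × ℚ => b < p.2).image Prod.fst, x < y := by
    intro x hx y hy
    rw [Finset.mem_image] at hx hy
    rcases hx with ⟨p, hp1, rfl⟩
    rcases hy with ⟨q, hq1, rfl⟩
    rw [Finset.mem_filter] at hp1 hq1
    rw [lt_iff_lt_of_cmp_eq_cmp (f.prop.1 _ hp1.1 _ hq1.1)]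
    exact lt_trans hp1.2 hq1.2
  obtain ⟨a, hRa, ha1, ha2⟩ :=
    exists_between' (R := fun b a => R a b) h2 b _ _ key
  refine ⟨a, hRa, ?_⟩
  rintro ⟨p1, p2⟩ hp
  have hne : p2 ≠ b := fun he => h ⟨p1, he ▸ hp⟩
  rcases lt_or_gt_of_ne hne with hl | hr
  · have hthis : p1 < a ∧ p2 < b :=
      ⟨ha1 _ (Finset.mem_image.mpr ⟨(p1, p2), Finset.mem_filter.mpr ⟨hp, hl⟩, rfl⟩), hl⟩
    rw [← cmp_eq_lt_iff, ← cmp_eq_lt_iff] at hthis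
    exact hthis.1.trans hthis.2.symm
  · have hthis : a < p1 ∧ b < p2 :=
      ⟨ha2 _ (Finset.mem_image.mpr ⟨(p1, p2), Finset.mem_filter.mpr ⟨hp, hr⟩, rfl⟩), hr⟩
    rw [← cmp_eq_gt_iff, ← cmp_eq_gt_iff] at hthis
    exact hthis.1.trans hthis.2.symm

/-- Extend a colored partial iso to include `a` in its domain. -/
def definedAtLeft (h1 : ∀ a x y : ℚ, x < y → ∃ b, x < b ∧ b < y ∧ R a b) (a : ℚ) :
    Cofinal (CPI R) where
  carrier := { f | ∃ b, (a, b) ∈ f.val }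
  isCofinal f := by
    obtain ⟨b, hRb, hb⟩ := exists_across h1 f a
    refine ⟨⟨insert (a, b) f.val, fun p hp q hq => ?_, fun p hp => ?_⟩,
      ⟨b, Finset.mem_insert_self _ _⟩, Finset.subset_insert _ _⟩
    · rw [Finset.mem_insert] at hp hq
      rcases hp with rfl | pf <;> rcases hq with rfl | qf
      · simp only [cmp_self_eq_eq]
      · rw [cmp_eq_cmp_symm]; exact hb _ qf
      · exact hb _ pf
      · exact f.prop.1 _ pf _ qf
    · rw [Finset.mem_insert] at hp
      rcases hp with rfl | pf
      · exact hRb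
      · exact f.prop.2 _ pf

/-- Extend a colored partial iso to include `b` in its range. -/
def definedAtRight (h2 : ∀ b x y : ℚ, x < y → ∃ a, x < a ∧ a < y ∧ R a b) (b : ℚ) :
    Cofinal (CPI R) where
  carrier := { f | ∃ a, (a, b) ∈ f.val }
  isCofinal f := by
    obtain ⟨a, hRa, ha⟩ := exists_across_right h2 f b
    refine ⟨⟨insert (a, b) f.val, fun p hp q hq => ?_, fun p hp => ?_⟩,
      ⟨a, Finset.mem_insert_self _ _⟩, Finset.subset_insert _ _⟩
    · rw [Finset.mem_insert] at hp hq
      rcases hp with rfl | pf <;> rcases hq with rfl | qf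
      · simp only [cmp_self_eq_eq]
      · rw [cmp_eq_cmp_symm]; exact ha _ qf
      · exact ha _ pf
      · exact f.prop.1 _ pf _ qf
    · rw [Finset.mem_insert] at hp
      rcases hp with rfl | pf
      · exact hRa
      · exact f.prop.2 _ pf

/-- The colored back-and-forth theorem on `ℚ`. -/
theorem exists_orderIso_rel (h1 : ∀ a x y : ℚ, x < y → ∃ b, x < b ∧ b < y ∧ R a b)
    (h2 : ∀ b x y : ℚ, x < y → ∃ a, x < a ∧ a < y ∧ R a b) :
    ∃ g : ℚ ≃o ℚ, ∀ a, R a (g a) := by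
  let to_cofinal : ℚ ⊕ ℚ → Cofinal (CPI R) := fun p =>
    Sum.recOn p (fun a => definedAtLeft h1 a) (fun b => definedAtRight h2 b)
  let I : Ideal (CPI R) := idealOfCofinals default to_cofinal
  have hF : ∀ a : ℚ, ∃ b : ℚ, ∃ f ∈ I, (a, b) ∈ f.val := by
    intro a
    obtain ⟨f, hf1, hf2⟩ := cofinal_meets_idealOfCofinals default to_cofinal (Sum.inl a)
    obtain ⟨b, hb⟩ := hf1
    exact ⟨b, f, hf2, hb⟩
  have hG : ∀ b : ℚ, ∃ a : ℚ, ∃ f ∈ I, (a, b) ∈ f.val := by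
    intro b
    obtain ⟨f, hf1, hf2⟩ := cofinal_meets_idealOfCofinals default to_cofinal (Sum.inr b)
    obtain ⟨a, ha⟩ := hf1
    exact ⟨a, f, hf2, ha⟩
  let F : ℚ → ℚ := fun a => (hF a).choose
  let G : ℚ → ℚ := fun b => (hG b).choose
  have hcmp : ∀ a b : ℚ, cmp a (G b) = cmp (F a) b := by
    intro a b
    obtain ⟨f, hf, ha⟩ := (hF a).choose_spec
    obtain ⟨g, hg, hb⟩ := (hG b).choose_spec
    rcases I.directed _ hf _ hg with ⟨m, _, fm, gm⟩
    exact m.prop.1 (a, _) (fm ha) (_, b) (gm hb)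
  refine ⟨OrderIso.ofCmpEqCmp F G hcmp, fun a => ?_⟩
  obtain ⟨f, _, ha⟩ := (hF a).choose_spec
  exact f.prop.2 _ ha

/-! ### Sigma lemmas -/

universe v

variable {G : ℚ → Type v} [∀ q, LinearOrder (G q)]

theorem fst_le_of_lt {a b : Σₗ q, G q} (h : a < b) : a.1 ≤ b.1 := by
  rcases Sigma.Lex.lt_def.mp h with h' | ⟨h', -⟩
  · exact h'.le
  · exact h'.le

theorem snd_lt_of_lt_of_fst_eq {q : ℚ} {a b : Σₗ q, G q} (h : a < b)
    (ha : a.1 = q) (hb : b.1 = q) : ha ▸ a.2 < hb ▸ b.2 := by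
  obtain ⟨qa, xa⟩ := a
  obtain ⟨qb, xb⟩ := b
  dsimp only at ha hb
  subst ha; subst hb
  rcases Sigma.Lex.lt_def.mp h with h' | ⟨h', h2⟩
  · exact absurd h' (lt_irrefl _)
  · exact h2

theorem sigma_eta_cast {q' : ℚ} {s : (q : ℚ) × G q} (h : s.1 = q') :
    s = ⟨q', h ▸ s.2⟩ := by
  obtain ⟨qs, xs⟩ := s
  dsimp only at h
  subst h
  rfl

theorem mk_cast_eq {G : ℚ → Type v} {i j : ℚ} (h : i = j) (y : G j) :
    (⟨i, h.symm ▸ y⟩ : (q : ℚ) × G q) = ⟨j, y⟩ := by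
  subst h
  rfl

theorem cast_eq_of_sigma_eq {q' : ℚ} {s : (q : ℚ) × G q} {v : G q'}
    (h : s = ⟨q', v⟩) (h' : s.1 = q') : h' ▸ s.2 = v := by
  subst h
  rfl

/-! ### Forward direction -/

variable {G₀ G₁ : ℚ → Type v} [∀ q, LinearOrder (G₀ q)] [∀ q, LinearOrder (G₁ q)]

theorem fiber_const (hne₁ : ∀ q, Nonempty (G₁ q)) (hsc₀ : ∀ q, ¬ Nonempty (ℚ ↪o G₀ q))
    (e : Lex ((q : ℚ) × G₀ q) ≃o Lex ((q : ℚ) × G₁ q)) (q : ℚ) (x y : G₀ q) :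
    (ofLex (e (toLex ⟨q, x⟩))).1 = (ofLex (e (toLex ⟨q, y⟩))).1 := by
  suffices H : ∀ x y : G₀ q,
      ¬ (ofLex (e (toLex ⟨q, x⟩))).1 < (ofLex (e (toLex ⟨q, y⟩))).1 by
    exact le_antisymm (not_lt.mp (H y x)) (not_lt.mp (H x y))
  clear x y
  intro x y hlt
  set q₁ := (ofLex (e (toLex ⟨q, x⟩))).1 with hq₁
  set q₂ := (ofLex (e (toLex ⟨q, y⟩))).1 with hq₂
  haveI : Nonempty (Set.Ioo q₁ q₂) := Set.nonempty_Ioo_subtype hlt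
  obtain ⟨ψ⟩ : Nonempty (ℚ ≃o (Set.Ioo q₁ q₂ : Set ℚ)) :=
    iso_of_countable_dense ℚ (Set.Ioo q₁ q₂)
  have pt : ∀ q', G₁ q' := fun q' => Classical.choice (hne₁ q')
  let m : ℚ → Lex ((q : ℚ) × G₀ q) := fun r =>
    e.symm (toLex ⟨(ψ r : ℚ), pt _⟩)
  have hlow : ∀ r : ℚ, toLex ⟨q, x⟩ < m r := by
    intro r
    have h1 : e (toLex ⟨q, x⟩) < toLex ⟨(ψ r : ℚ), pt _⟩ :=
      Sigma.Lex.lt_def.mpr (Or.inl (ψ r).2.1)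
    have := e.symm.strictMono h1
    rwa [e.symm_apply_apply] at this
  have hhigh : ∀ r : ℚ, m r < toLex ⟨q, y⟩ := by
    intro r
    have h1 : toLex ⟨(ψ r : ℚ), pt _⟩ < e (toLex ⟨q, y⟩) :=
      Sigma.Lex.lt_def.mpr (Or.inl (ψ r).2.2)
    have := e.symm.strictMono h1
    rwa [e.symm_apply_apply] at this
  have hfst : ∀ r : ℚ, (ofLex (m r)).1 = q := by
    intro r
    exact le_antisymm (fst_le_of_lt (hhigh r)) (fst_le_of_lt (hlow r))
  let emb : ℚ → G₀ q := fun r => (hfst r) ▸ (ofLex (m r)).2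
  have hmono : StrictMono emb := by
    intro r r' hr
    have h1 : (ψ r : ℚ) < (ψ r' : ℚ) := ψ.strictMono hr
    have h2 : toLex (⟨(ψ r : ℚ), pt _⟩ : (q : ℚ) × G₁ q) < toLex ⟨(ψ r' : ℚ), pt _⟩ :=
      Sigma.Lex.lt_def.mpr (Or.inl h1)
    have h3 : m r < m r' := e.symm.strictMono h2
    exact snd_lt_of_lt_of_fst_eq h3 (hfst r) (hfst r')
  exact hsc₀ q ⟨OrderEmbedding.ofStrictMono emb hmono⟩

theorem forward_dir (hne₀ : ∀ q, Nonempty (G₀ q)) (hne₁ : ∀ q, Nonempty (G₁ q))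
    (hsc₀ : ∀ q, ¬ Nonempty (ℚ ↪o G₀ q)) (hsc₁ : ∀ q, ¬ Nonempty (ℚ ↪o G₁ q))
    (e : Lex ((q : ℚ) × G₀ q) ≃o Lex ((q : ℚ) × G₁ q)) (q : ℚ) :
    ∃ q', Nonempty (G₀ q ≃o G₁ q') := by
  obtain ⟨x0⟩ := hne₀ q
  set q' := (ofLex (e (toLex ⟨q, x0⟩))).1 with hq'
  have hfst : ∀ x : G₀ q, (ofLex (e (toLex ⟨q, x⟩))).1 = q' :=
    fun x => fiber_const hne₁ hsc₀ e q x x0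
  let f : G₀ q → G₁ q' := fun x => (hfst x) ▸ (ofLex (e (toLex ⟨q, x⟩))).2
  have hmono : StrictMono f := by
    intro x y hxy
    have h1 : toLex (⟨q, x⟩ : (q : ℚ) × G₀ q) < toLex ⟨q, y⟩ :=
      Sigma.Lex.lt_def.mpr (Or.inr ⟨rfl, hxy⟩)
    exact snd_lt_of_lt_of_fst_eq (e.strictMono h1) (hfst x) (hfst y)
  have hsurj : Function.Surjective f := by
    intro v
    have hsfst : ∀ u : G₁ q', (ofLex (e.symm (toLex ⟨q', u⟩))).1 = q := by
      intro u
      have hx0 : e (toLex ⟨q, x0⟩) = toLex ⟨q', f x0⟩ := by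
        have := sigma_eta_cast (G := G₁) (hfst x0)
        exact congrArg toLex this
      have h1 : (ofLex (e.symm (toLex ⟨q', f x0⟩))).1 = q := by
        rw [← hx0, e.symm_apply_apply]
        rfl
      rw [← h1]
      exact fiber_const hne₀ hsc₁ e.symm q' u (f x0)
    set s := ofLex (e.symm (toLex ⟨q', v⟩)) with hs_def
    have hs : s.1 = q := hsfst v
    refine ⟨hs ▸ s.2, ?_⟩
    have hes : e (toLex ⟨q, hs ▸ s.2⟩) = toLex ⟨q', v⟩ := by
      have h1 : toLex (⟨q, hs ▸ s.2⟩ : (q : ℚ) × G₀ q) = toLex s :=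
        congrArg toLex (sigma_eta_cast hs).symm
      rw [h1, hs_def]
      exact e.apply_symm_apply _
    exact cast_eq_of_sigma_eq (congrArg ofLex hes) (hfst _)
  exact ⟨q', ⟨StrictMono.orderIsoOfSurjective f hmono hsurj⟩⟩

/-! ### Backward direction : sigma congruence -/

theorem sigma_iso (g : ℚ ≃o ℚ) (φ : ∀ q, G₀ q ≃o G₁ (g q)) :
    Nonempty (Lex ((q : ℚ) × G₀ q) ≃o Lex ((q : ℚ) × G₁ q)) := by
  let f : Lex ((q : ℚ) × G₀ q) → Lex ((q : ℚ) × G₁ q) :=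
    fun s => toLex ⟨g (ofLex s).1, φ _ (ofLex s).2⟩
  have hmono : StrictMono f := by
    intro a b hab
    rcases Sigma.Lex.lt_def.mp hab with h | ⟨h, h2⟩
    · exact Sigma.Lex.lt_def.mpr (Or.inl (g.strictMono h))
    · obtain ⟨qa, xa⟩ := a
      obtain ⟨qb, xb⟩ := b
      dsimp only at h
      subst h
      exact Sigma.Lex.lt_def.mpr (Or.inr ⟨rfl, (φ qa).strictMono h2⟩)
  have hsurj : Function.Surjective f := by
    rintro ⟨q', y⟩
    have hq : g (g.symm q') = q' := g.apply_symm_apply q'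
    refine ⟨toLex ⟨g.symm q', (φ _).symm (hq.symm ▸ y)⟩, ?_⟩
    show toLex (⟨g (g.symm q'), φ _ ((φ _).symm (hq.symm ▸ y))⟩ : (q : ℚ) × G₁ q) = _
    have h2 : (φ (g.symm q')) ((φ (g.symm q')).symm (hq.symm ▸ y)) = hq.symm ▸ y :=
      OrderIso.apply_symm_apply _ _
    rw [h2]
    exact congrArg toLex (mk_cast_eq hq y)
  exact ⟨StrictMono.orderIsoOfSurjective f hmono hsurj⟩

end Stmt14Aux

end

open Stmt14Aux in
/-- For families of nonempty countable scattered orders indexed by `ℚ` whose isomorphism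
classes appear densely, `η^{f₀} ≅ η^{f₁}` iff the two families realize the same orders
up to isomorphism. -/
theorem stmt_14 (F₀ F₁ : ℚ → Type u) [∀ q, LinearOrder (F₀ q)] [∀ q, LinearOrder (F₁ q)]
    (h₀ne : ∀ q, Nonempty (F₀ q)) (h₀ct : ∀ q, Countable (F₀ q))
    (h₀sc : ∀ q, ¬ Nonempty (ℚ ↪o F₀ q))
    (h₁ne : ∀ q, Nonempty (F₁ q)) (h₁ct : ∀ q, Countable (F₁ q))
    (h₁sc : ∀ q, ¬ Nonempty (ℚ ↪o F₁ q))
    (h₀dense : ∀ q₀ a b : ℚ, a < b → ∃ q, a < q ∧ q < b ∧ Nonempty (F₀ q ≃o F₀ q₀))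
    (h₁dense : ∀ q₀ a b : ℚ, a < b → ∃ q, a < q ∧ q < b ∧ Nonempty (F₁ q ≃o F₁ q₀)) :
    Nonempty (Lex ((q : ℚ) × F₀ q) ≃o Lex ((q : ℚ) × F₁ q)) ↔
      ((∀ q : ℚ, ∃ q' : ℚ, Nonempty (F₀ q ≃o F₁ q')) ∧
        (∀ q' : ℚ, ∃ q : ℚ, Nonempty (F₀ q ≃o F₁ q'))) := by
  constructor
  · rintro ⟨e⟩
    constructor
    · exact fun q => forward_dir h₀ne h₁ne h₀sc h₁sc e q
    · intro q'
      obtain ⟨q, ⟨ψ⟩⟩ := forward_dir h₁ne h₀ne h₁sc h₀sc e.symm q'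
      exact ⟨q, ⟨ψ.symm⟩⟩
  · rintro ⟨h1, h2⟩
    have d1 : ∀ q a b : ℚ, a < b → ∃ x, a < x ∧ x < b ∧ Nonempty (F₀ q ≃o F₁ x) := by
      intro q a b hab
      obtain ⟨q', ⟨φ⟩⟩ := h1 q
      obtain ⟨x, hx1, hx2, ⟨ψ⟩⟩ := h₁dense q' a b hab
      exact ⟨x, hx1, hx2, ⟨φ.trans ψ.symm⟩⟩
    have d2 : ∀ q' a b : ℚ, a < b → ∃ x, a < x ∧ x < b ∧ Nonempty (F₀ x ≃o F₁ q') := by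
      intro q' a b hab
      obtain ⟨q, ⟨φ⟩⟩ := h2 q'
      obtain ⟨x, hx1, hx2, ⟨ψ⟩⟩ := h₀dense q a b hab
      exact ⟨x, hx1, hx2, ⟨ψ.trans φ⟩⟩
    obtain ⟨g, hg⟩ := exists_orderIso_rel d1 d2
    exact sigma_iso g (fun q => (hg q).some)
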